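/- The closure $\overline{T} = T^{**}$ of $T$ has domain $D(\overline{T}) = \{ f \in D(T^*) : \text{for every } n \in \mathbb{N}, \text{ the } n\text{-th section } P_n f \text{ belongs to the domain of the closure of } J_n \}$, where $(P_n f)(m) := f(m,n)$ is regarded as an element of $\ell^2(\mathbb{N};\mathbb{C})$; and $\overline{T} f = T^* f$ for $f$ in this domain. -/

import Mathlib

noncomputable section

/-- The Hilbert space `ℓ²(ℕ; ℂ)`. -/
abbrev H1 : Type := lp (fun _ : ℕ => ℂ) 2

/-- The Hilbert space `ℓ²(ℕ×ℕ; ℂ)`. -/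
abbrev H2 : Type := lp (fun _ : ℕ × ℕ => ℂ) 2

/-- `β(m,n) = (1/2)·√(m+1)·(1-m-n)`. -/
def beta (m n : ℕ) : ℝ := (1 / 2) * Real.sqrt ((m : ℝ) + 1) * (1 - (m : ℝ) - (n : ℝ))

/-- The formal Jacobi-type action on doubly indexed sequences, with `β(-1,n) = 0`. -/
def jacobiAct (g : ℕ × ℕ → ℂ) : ℕ × ℕ → ℂ := fun p =>
  (beta p.1 p.2 : ℂ) * g (p.1 + 1, p.2) +
    (if p.1 = 0 then 0 else (beta (p.1 - 1) p.2 : ℂ) * g (p.1 - 1, p.2))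

/-- The formal Jacobi action in the row `n`, with `β(-1,n) = 0`. -/
def jacobiActRow (n : ℕ) (u : ℕ → ℂ) : ℕ → ℂ := fun m =>
  (beta m n : ℂ) * u (m + 1) +
    (if m = 0 then 0 else (beta (m - 1) n : ℂ) * u (m - 1))

namespace CP

open Filter Topology ComplexConjugate

lemma two_pos' : (0:ℝ) < (2:ENNReal).toReal := by norm_num

lemma two_ne_top : (2:ENNReal) ≠ ⊤ := by norm_num

lemma inj_row (n : ℕ) : Function.Injective (fun m : ℕ => (m, n)) := by
  intro a b h; simpa using congrArg Prod.fst h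

lemma sec_memℓp (n : ℕ) (f : H2) : Memℓp (fun m : ℕ => (f : ℕ × ℕ → ℂ) (m, n)) 2 := by
  apply memℓp_gen
  have h2 : Summable (fun p : ℕ × ℕ => ‖(f : ℕ × ℕ → ℂ) p‖ ^ (2:ENNReal).toReal) :=
    (lp.memℓp f).summable two_pos'
  exact h2.comp_injective (inj_row n)

def embFun (n : ℕ) (u : ℕ → ℂ) : ℕ × ℕ → ℂ := fun p => if p.2 = n then u p.1 else 0

lemma embFun_range_zero (n : ℕ) (u : ℕ → ℂ) {p : ℕ × ℕ}
    (hp : p ∉ Set.range (fun m : ℕ => (m, n))) : embFun n u p = 0 := by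
  have : p.2 ≠ n := by
    intro h
    exact hp ⟨p.1, by rw [Prod.ext_iff]; exact ⟨rfl, h.symm⟩⟩
  simp [embFun, this]

lemma emb_memℓp (n : ℕ) (u : H1) : Memℓp (embFun n (u : ℕ → ℂ)) 2 := by
  apply memℓp_gen
  have h1 : Summable (fun m : ℕ => ‖(u : ℕ → ℂ) m‖ ^ (2:ENNReal).toReal) :=
    (lp.memℓp u).summable two_pos'
  have := (inj_row n).summable_iff (f := fun p : ℕ × ℕ => ‖embFun n (u : ℕ → ℂ) p‖ ^ (2:ENNReal).toReal)
    (fun p hp => by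
      simp only
      rw [embFun_range_zero n _ hp]
      simp [Real.zero_rpow two_pos'.ne'])
  apply this.mp
  convert h1 using 1
  ext m
  simp [embFun]

/-- Section as a linear map. -/
def secLM (n : ℕ) : H2 →ₗ[ℂ] H1 where
  toFun f := ⟨fun m => (f : ℕ × ℕ → ℂ) (m, n), sec_memℓp n f⟩
  map_add' f g := by
    apply lp.ext; funext m
    simp only [lp.coeFn_add, Pi.add_apply]
  map_smul' c f := by
    apply lp.ext; funext m
    simp only [lp.coeFn_smul, Pi.smul_apply, RingHom.id_apply]

@[simp] lemma secLM_apply (n : ℕ) (f : H2) (m : ℕ) :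
    (secLM n f : ℕ → ℂ) m = (f : ℕ × ℕ → ℂ) (m, n) := rfl

lemma secLM_norm (n : ℕ) (f : H2) : ‖secLM n f‖ ≤ 1 * ‖f‖ := by
  rw [one_mul]
  rw [lp.norm_eq_tsum_rpow two_pos' (secLM n f), lp.norm_eq_tsum_rpow two_pos' f]
  apply Real.rpow_le_rpow (tsum_nonneg (fun m => Real.rpow_nonneg (norm_nonneg _) _))
  · apply Summable.tsum_le_tsum_of_inj (fun m : ℕ => (m, n)) (inj_row n)
    · intro p _; exact Real.rpow_nonneg (norm_nonneg _) _
    · intro m; simp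
    · exact ((lp.memℓp f).summable two_pos').comp_injective (inj_row n)
    · exact (lp.memℓp f).summable two_pos'
  · norm_num

def secL (n : ℕ) : H2 →L[ℂ] H1 := (secLM n).mkContinuous 1 (secLM_norm n)

@[simp] lemma secL_apply (n : ℕ) (f : H2) (m : ℕ) :
    (secL n f : ℕ → ℂ) m = (f : ℕ × ℕ → ℂ) (m, n) := rfl

/-- Extension by zero as a linear map. -/
def embLM (n : ℕ) : H1 →ₗ[ℂ] H2 where
  toFun u := ⟨embFun n (u : ℕ → ℂ), emb_memℓp n u⟩
  map_add' u v := by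
    apply lp.ext; funext p
    show embFun n _ p = _
    simp only [lp.coeFn_add, Pi.add_apply]
    show _ = embFun n _ p + embFun n _ p
    simp only [embFun, lp.coeFn_add, Pi.add_apply]
    split <;> simp
  map_smul' c u := by
    apply lp.ext; funext p
    show embFun n _ p = _
    simp only [lp.coeFn_smul, Pi.smul_apply, RingHom.id_apply]
    show _ = c • embFun n _ p
    simp only [embFun, lp.coeFn_smul, Pi.smul_apply]
    split <;> simp

@[simp] lemma embLM_apply (n : ℕ) (u : H1) (p : ℕ × ℕ) :
    (embLM n u : ℕ × ℕ → ℂ) p = if p.2 = n then (u : ℕ → ℂ) p.1 else 0 := rfl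

lemma embLM_norm (n : ℕ) (u : H1) : ‖embLM n u‖ ≤ 1 * ‖u‖ := by
  rw [one_mul]
  rw [lp.norm_eq_tsum_rpow two_pos' (embLM n u), lp.norm_eq_tsum_rpow two_pos' u]
  apply Real.rpow_le_rpow (tsum_nonneg (fun m => Real.rpow_nonneg (norm_nonneg _) _))
  · have heq : ∑' p : ℕ × ℕ, ‖(embLM n u : ℕ × ℕ → ℂ) p‖ ^ (2:ENNReal).toReal
        = ∑' m : ℕ, ‖(u : ℕ → ℂ) m‖ ^ (2:ENNReal).toReal := by
      rw [← (inj_row n).tsum_eq]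
      · apply tsum_congr; intro m; simp
      · intro p hp
        by_contra hnot
        apply hp
        have h0 : (embLM n u : ℕ × ℕ → ℂ) p = 0 := embFun_range_zero n _ hnot
        simp only [Function.mem_support, ne_eq, not_not]
        rw [h0]; simp [Real.zero_rpow two_pos'.ne']
    rw [heq]
  · norm_num

def embL (n : ℕ) : H1 →L[ℂ] H2 := (embLM n).mkContinuous 1 (embLM_norm n)

@[simp] lemma embL_apply (n : ℕ) (u : H1) (p : ℕ × ℕ) :
    (embL n u : ℕ × ℕ → ℂ) p = if p.2 = n then (u : ℕ → ℂ) p.1 else 0 := rfl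

lemma sec_emb (n : ℕ) (u : H1) : secL n (embL n u) = u := by
  apply lp.ext; funext m
  simp

end CP

namespace CP

open Filter Topology ComplexConjugate

local notation "⟪" x ", " y "⟫" => @inner ℂ _ _ x y

lemma jacobi_row_eq (g : ℕ × ℕ → ℂ) (n m : ℕ) :
    jacobiActRow n (fun m => g (m, n)) m = jacobiAct g (m, n) := rfl

lemma jacobi_emb (n : ℕ) (u : ℕ → ℂ) (p : ℕ × ℕ) :
    jacobiAct (embFun n u) p = embFun n (jacobiActRow n u) p := by
  by_cases h : p.2 = n <;>
    simp [jacobiAct, jacobiActRow, embFun, h, mul_ite, mul_zero]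

lemma single_apply'' {ι : Type*} [DecidableEq ι] (i j : ι) (a : ℂ) :
    (lp.single (E := fun _ : ι => ℂ) 2 i a : ι → ℂ) j = if j = i then a else 0 := by
  rw [lp.single_apply]
  by_cases h : j = i
  · subst h; simp
  · simp [h]

/-- The adjoint of a densely defined operator is closed. -/
lemma adjoint_isClosed {E F : Type*} [NormedAddCommGroup E] [InnerProductSpace ℂ E]
    [NormedAddCommGroup F] [InnerProductSpace ℂ F] [CompleteSpace E] [CompleteSpace F]
    (S : E →ₗ.[ℂ] F) (dens : Dense (S.domain : Set E)) : S.adjoint.IsClosed := by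
  unfold LinearPMap.IsClosed
  apply IsSeqClosed.isClosed
  intro x z hmem hlim
  have h1 : Tendsto (fun k => (x k).1) atTop (𝓝 z.1) := (continuous_fst.tendsto z).comp hlim
  have h2 : Tendsto (fun k => (x k).2) atTop (𝓝 z.2) := (continuous_snd.tendsto z).comp hlim
  have key : ∀ v : S.domain, ⟪z.2, (v : E)⟫ = ⟪z.1, (S v : F)⟫ := by
    intro v
    have t1 : Tendsto (fun k => ⟪(x k).2, (v : E)⟫) atTop (𝓝 ⟪z.2, (v : E)⟫) :=
      h2.inner tendsto_const_nhds
    have t2 : Tendsto (fun k => ⟪(x k).1, (S v : F)⟫) atTop (𝓝 ⟪z.1, (S v : F)⟫) :=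
      h1.inner tendsto_const_nhds
    have heq : (fun k => ⟪(x k).2, (v : E)⟫) = fun k => ⟪(x k).1, (S v : F)⟫ := by
      funext k
      obtain ⟨yk, hy1, hy2⟩ := (S.adjoint.mem_graph_iff).mp (hmem k)
      rw [← hy1, ← hy2]
      exact LinearPMap.adjoint_isFormalAdjoint dens yk v
    rw [heq] at t1
    exact tendsto_nhds_unique t1 t2
  have hz1 : z.1 ∈ S.adjoint.domain := LinearPMap.mem_adjoint_domain_of_exists _ ⟨z.2, key⟩
  rw [SetLike.mem_coe, LinearPMap.mem_graph_iff]
  exact ⟨⟨z.1, hz1⟩, rfl, LinearPMap.adjoint_apply_eq dens _ (fun v => key v)⟩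

section T

variable (T : H2 →ₗ.[ℂ] H2)
  (hTdom : ∀ f : H2, f ∈ T.domain ↔ {p : ℕ × ℕ | (f : ℕ × ℕ → ℂ) p ≠ 0}.Finite)
  (hTact : ∀ f : T.domain, ∀ p : ℕ × ℕ, (T f : H2) p = jacobiAct (⇑(f : H2)) p)

include hTdom in
lemma dense_domain : Dense (T.domain : Set H2) := by
  intro f
  apply mem_closure_of_tendsto (lp.hasSum_single two_ne_top f)
  apply Filter.Eventually.of_forall
  intro s
  rw [SetLike.mem_coe, hTdom]
  apply Set.Finite.subset s.finite_toSet
  intro p hp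
  simp only [Set.mem_setOf_eq] at hp
  by_contra hps
  apply hp
  rw [lp.coeFn_sum, Finset.sum_apply]
  apply Finset.sum_eq_zero
  intro q hq
  rw [single_apply'']
  have : p ≠ q := fun h => hps (h ▸ hq)
  simp [this]

include hTdom hTact in
lemma T_symm : T.IsFormalAdjoint T := by
  intro x y
  have hx : {p : ℕ × ℕ | ((x : H2) : ℕ × ℕ → ℂ) p ≠ 0}.Finite := (hTdom _).mp x.2
  have hy : {p : ℕ × ℕ | ((y : H2) : ℕ × ℕ → ℂ) p ≠ 0}.Finite := (hTdom _).mp y.2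
  set X : ℕ × ℕ → ℂ := ⇑((x : H2)) with hX
  set Y : ℕ × ℕ → ℂ := ⇑((y : H2)) with hY
  set A : ℕ × ℕ → ℂ := fun p => (beta p.1 p.2 : ℂ) * conj (X (p.1+1, p.2)) * Y p with hA
  set B : ℕ × ℕ → ℂ := fun p =>
    if p.1 = 0 then 0 else (beta (p.1-1) p.2 : ℂ) * conj (X (p.1-1, p.2)) * Y p with hB
  set C : ℕ × ℕ → ℂ := fun p => (beta p.1 p.2 : ℂ) * conj (X p) * Y (p.1+1, p.2) with hC
  set D : ℕ × ℕ → ℂ := fun p =>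
    if p.1 = 0 then 0 else (beta (p.1-1) p.2 : ℂ) * conj (X p) * Y (p.1-1, p.2) with hD
  have sA : Summable A := by
    apply summable_of_ne_finset_zero (s := hy.toFinset)
    intro p hp
    have hYp : Y p = 0 := of_not_not (fun h => hp (hy.mem_toFinset.mpr h))
    simp [hA, hYp]
  have sB : Summable B := by
    apply summable_of_ne_finset_zero (s := hy.toFinset)
    intro p hp
    have hYp : Y p = 0 := of_not_not (fun h => hp (hy.mem_toFinset.mpr h))
    simp [hB, hYp]
  have sC : Summable C := by
    apply summable_of_ne_finset_zero (s := hx.toFinset)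
    intro p hp
    have hXp : X p = 0 := of_not_not (fun h => hp (hx.mem_toFinset.mpr h))
    simp [hC, hXp]
  have sD : Summable D := by
    apply summable_of_ne_finset_zero (s := hx.toFinset)
    intro p hp
    have hXp : X p = 0 := of_not_not (fun h => hp (hx.mem_toFinset.mpr h))
    simp [hD, hXp]
  have shift_inj : Function.Injective (fun q : ℕ × ℕ => (q.1 + 1, q.2)) := by
    intro a b h
    rw [Prod.ext_iff] at h ⊢
    simp only at h
    omega
  have hBC : ∑' p, B p = ∑' q, C q := by
    rw [← shift_inj.tsum_eq (f := B)]
    · apply tsum_congr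
      intro q
      simp only [hB, hC, Nat.succ_ne_zero, if_false, Nat.add_sub_cancel]
    · intro p hp
      have hp1 : p.1 ≠ 0 := by
        intro h
        apply hp
        simp [hB, h]
      exact ⟨(p.1 - 1, p.2), by rw [Prod.ext_iff]; constructor <;> simp <;> omega⟩
  have hDA : ∑' p, D p = ∑' q, A q := by
    rw [← shift_inj.tsum_eq (f := D)]
    · apply tsum_congr
      intro q
      simp only [hD, hA, Nat.succ_ne_zero, if_false, Nat.add_sub_cancel]
    · intro p hp
      have hp1 : p.1 ≠ 0 := by
        intro h
        apply hp
        simp [hD, h]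
      exact ⟨(p.1 - 1, p.2), by rw [Prod.ext_iff]; constructor <;> simp <;> omega⟩
  have hLHS : ⟪(T x : H2), (y : H2)⟫ = ∑' p, (A p + B p) := by
    rw [lp.inner_eq_tsum]
    apply tsum_congr
    intro p
    rw [RCLike.inner_apply, hTact x p]
    show Y p * conj (jacobiAct X p) = _
    simp only [jacobiAct, hA, hB, map_add, map_mul, Complex.conj_ofReal, apply_ite conj,
      map_zero]
    split_ifs <;> ring
  have hRHS : ⟪(x : H2), (T y : H2)⟫ = ∑' p, (C p + D p) := by
    rw [lp.inner_eq_tsum]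
    apply tsum_congr
    intro p
    rw [RCLike.inner_apply, hTact y p]
    show jacobiAct Y p * conj (X p) = _
    simp only [jacobiAct, hC, hD]
    split_ifs <;> ring
  rw [hLHS, hRHS, Summable.tsum_add sA sB, Summable.tsum_add sC sD, hBC, hDA]
  ring

end T

end CP

namespace CP

open Filter Topology ComplexConjugate

local notation "⟪" x ", " y "⟫" => @inner ℂ _ _ x y

lemma map_topologicalClosure {X Y : Type*} [NormedAddCommGroup X] [NormedAddCommGroup Y]
    [NormedSpace ℂ X] [NormedSpace ℂ Y] (Φ : X →L[ℂ] Y) (G : Submodule ℂ X) (G' : Submodule ℂ Y)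
    (h : ∀ q ∈ G, Φ q ∈ G') {q : X} (hq : q ∈ G.topologicalClosure) :
    Φ q ∈ G'.topologicalClosure := by
  have h1 : (G : Set X) ⊆ Φ ⁻¹' (G'.topologicalClosure : Set Y) := fun z hz =>
    Set.mem_preimage.mpr (Submodule.le_topologicalClosure G' (h z hz))
  have h2 : closure (G : Set X) ⊆ Φ ⁻¹' (G'.topologicalClosure : Set Y) :=
    closure_minimal h1 ((Submodule.isClosed_topologicalClosure G').preimage Φ.continuous)
  have h3 : q ∈ closure (G : Set X) := by
    rw [← Submodule.topologicalClosure_coe]; exact hq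
  exact h2 h3

lemma emb_single (n m : ℕ) (a : ℂ) :
    embL n (lp.single 2 m a) = lp.single 2 ((m, n) : ℕ × ℕ) a := by
  apply lp.ext; funext q
  rw [show ((embL n (lp.single 2 m a) : H2) : ℕ × ℕ → ℂ) q
    = if q.2 = n then (lp.single (E := fun _ : ℕ => ℂ) 2 m a : ℕ → ℂ) q.1 else 0 from rfl]
  rw [single_apply'']
  rcases q with ⟨q1, q2⟩
  by_cases h2 : q2 = n
  · subst h2
    rw [single_apply'']
    by_cases h1 : q1 = m
    · subst h1; simp
    · simp [h1, Prod.mk.injEq]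
  · rw [single_apply'']
    simp [h2, Prod.mk.injEq]

lemma hasSum_emb_sec (f : H2) : HasSum (fun n => embL n (secL n f)) f := by
  have h1 : HasSum (fun p : ℕ × ℕ => lp.single 2 p ((f : ℕ × ℕ → ℂ) p)) f :=
    lp.hasSum_single two_ne_top f
  have h2 : HasSum ((fun p : ℕ × ℕ => lp.single 2 p ((f : ℕ × ℕ → ℂ) p)) ∘ (Equiv.prodComm ℕ ℕ)) f :=
    (Equiv.hasSum_iff (Equiv.prodComm ℕ ℕ)).mpr h1
  apply h2.prod_fiberwise
  intro n
  have h3 : HasSum (fun m => lp.single 2 m ((secL n f : ℕ → ℂ) m)) (secL n f) :=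
    lp.hasSum_single two_ne_top _
  have h4 := (embL n).hasSum h3
  have h5 : (fun m => embL n (lp.single 2 m ((secL n f : ℕ → ℂ) m)))
      = fun m => ((fun p : ℕ × ℕ => lp.single 2 p ((f : ℕ × ℕ → ℂ) p)) ∘ (Equiv.prodComm ℕ ℕ)) (n, m) := by
    funext m
    rw [emb_single]
    rfl
  rwa [h5] at h4

section TJ

variable (T : H2 →ₗ.[ℂ] H2)
  (hTdom : ∀ f : H2, f ∈ T.domain ↔ {p : ℕ × ℕ | (f : ℕ × ℕ → ℂ) p ≠ 0}.Finite)
  (hTact : ∀ f : T.domain, ∀ p : ℕ × ℕ, (T f : H2) p = jacobiAct (⇑(f : H2)) p)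
  (J : ℕ → (H1 →ₗ.[ℂ] H1))
  (hJdom : ∀ n : ℕ, ∀ u : H1, u ∈ (J n).domain ↔ {m : ℕ | (u : ℕ → ℂ) m ≠ 0}.Finite)
  (hJact : ∀ n : ℕ, ∀ u : (J n).domain, ∀ m : ℕ,
    ((J n) u : H1) m = jacobiActRow n (⇑(u : H1)) m)

include hTdom hTact in
lemma adj_apply_pt (v : T.adjoint.domain) (p : ℕ × ℕ) :
    ((T.adjoint v : H2) : ℕ × ℕ → ℂ) p = jacobiAct (⇑((v : H2))) p := by
  classical
  rcases p with ⟨p1, p2⟩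
  have dens := dense_domain T hTdom
  have hepmem : lp.single 2 ((p1, p2) : ℕ × ℕ) (1 : ℂ) ∈ T.domain := by
    rw [hTdom]
    apply Set.Finite.subset (Set.finite_singleton ((p1, p2) : ℕ × ℕ))
    intro q hq
    simp only [Set.mem_setOf_eq, single_apply''] at hq
    rcases eq_or_ne q (p1, p2) with h | h
    · exact h ▸ rfl
    · simp [h] at hq
  set ep : T.domain := ⟨lp.single 2 ((p1, p2) : ℕ × ℕ) 1, hepmem⟩ with hep
  set w : H2 := (T.adjoint v : H2) with hw
  have h1 : ⟪((ep : H2)), w⟫ = (w : ℕ × ℕ → ℂ) (p1, p2) := by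
    show ⟪(lp.single 2 ((p1, p2) : ℕ × ℕ) (1 : ℂ) : H2), w⟫ = _
    rw [lp.inner_single_left, RCLike.inner_apply]
    simp
  have h2 : ⟪((ep : H2)), w⟫ = ⟪(T ep : H2), ((v : H2))⟫ := by
    calc ⟪((ep : H2)), w⟫ = conj ⟪w, ((ep : H2))⟫ := (inner_conj_symm _ _).symm
    _ = conj ⟪((v : H2)), (T ep : H2)⟫ := by
        rw [LinearPMap.adjoint_isFormalAdjoint dens v ep]
    _ = ⟪(T ep : H2), ((v : H2))⟫ := inner_conj_symm _ _
  have hTep : ∀ q1 q2 : ℕ, ((T ep : H2) : ℕ × ℕ → ℂ) (q1, q2) =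
      (beta q1 q2 : ℂ) * (if q1 + 1 = p1 ∧ q2 = p2 then 1 else 0) +
        (if q1 = 0 then 0 else
          (beta (q1 - 1) q2 : ℂ) * (if q1 - 1 = p1 ∧ q2 = p2 then 1 else 0)) := by
    intro q1 q2
    rw [hTact ep (q1, q2)]
    show jacobiAct (⇑(lp.single 2 ((p1, p2) : ℕ × ℕ) (1 : ℂ) : H2)) (q1, q2) = _
    simp only [jacobiAct, single_apply'', Prod.mk.injEq]
  have hab : ((p1 + 1, p2) : ℕ × ℕ) ≠ ((p1 - 1, p2) : ℕ × ℕ) := by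
    intro h
    rw [Prod.mk.injEq] at h
    omega
  have hvanish : ∀ q : ℕ × ℕ, q ∉ ({(p1 + 1, p2), (p1 - 1, p2)} : Finset (ℕ × ℕ)) →
      conj (((T ep : H2) : ℕ × ℕ → ℂ) q) * ((v : H2) : ℕ × ℕ → ℂ) q = 0 := by
    rintro ⟨q1, q2⟩ hq
    simp only [Finset.mem_insert, Finset.mem_singleton, Prod.mk.injEq, not_or] at hq
    rw [hTep q1 q2]
    split_ifs with c1 c2 c3 <;>
      first
        | contradiction
        | (exfalso; omega)
        | simp
  have h3 : ⟪(T ep : H2), ((v : H2))⟫ =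
      ∑ q ∈ ({(p1 + 1, p2), (p1 - 1, p2)} : Finset (ℕ × ℕ)),
        conj (((T ep : H2) : ℕ × ℕ → ℂ) q) * ((v : H2) : ℕ × ℕ → ℂ) q := by
    rw [lp.inner_eq_tsum]
    rw [show (fun q => ⟪((T ep : H2) : ℕ × ℕ → ℂ) q, ((v : H2) : ℕ × ℕ → ℂ) q⟫)
      = fun q => conj (((T ep : H2) : ℕ × ℕ → ℂ) q) * ((v : H2) : ℕ × ℕ → ℂ) q from
      funext fun q => (RCLike.inner_apply _ _).trans (mul_comm _ _)]
    exact tsum_eq_sum hvanish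
  rw [Finset.sum_pair hab] at h3
  have hvala : ((T ep : H2) : ℕ × ℕ → ℂ) (p1 + 1, p2) = (beta p1 p2 : ℂ) := by
    rw [hTep (p1 + 1) p2]
    split_ifs with c1 c2 c3 <;>
      first
        | contradiction
        | (exfalso; omega)
        | simp
  have hvalb : ((T ep : H2) : ℕ × ℕ → ℂ) (p1 - 1, p2)
      = if p1 = 0 then 0 else (beta (p1 - 1) p2 : ℂ) := by
    rw [hTep (p1 - 1) p2]
    split_ifs with c1 c2 c3 <;>
      first
        | contradiction
        | (exfalso; omega)
        | simp
  have final := h1.symm.trans (h2.trans h3)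
  rw [hvala, hvalb] at final
  rw [show (w : ℕ × ℕ → ℂ) (p1, p2) = ((T.adjoint v : H2) : ℕ × ℕ → ℂ) (p1, p2) from rfl] at final
  rw [final]
  simp only [jacobiAct, Complex.conj_ofReal, apply_ite conj, map_zero, ite_mul, zero_mul]

include hTdom hTact in
lemma T_le_adj : T ≤ T.adjoint := (T_symm T hTdom hTact).le_adjoint (dense_domain T hTdom)

include hTdom hTact in
lemma clgraph_le_adj : T.graph.topologicalClosure ≤ T.adjoint.graph :=
  Submodule.topologicalClosure_minimal _ (LinearPMap.le_graph_of_le (T_le_adj T hTdom hTact))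
    (adjoint_isClosed T (dense_domain T hTdom))

include hTdom hTact in
lemma T_isClosable : T.IsClosable :=
  ((adjoint_isClosed T (dense_domain T hTdom)).isClosable).leIsClosable (T_le_adj T hTdom hTact)

include hTdom hTact hJdom hJact in
lemma sec_graph (n : ℕ) :
    ∀ q ∈ T.graph, ((secL n).prodMap (secL n)) q ∈ (J n).graph := by
  rintro ⟨q1, q2⟩ hq
  obtain ⟨g, hg1, hg2⟩ := T.mem_graph_iff.mp hq
  simp only at hg1 hg2
  have hfin : {p : ℕ × ℕ | (q1 : ℕ × ℕ → ℂ) p ≠ 0}.Finite := (hTdom q1).mp (hg1 ▸ g.2)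
  have hmem : secL n q1 ∈ (J n).domain := by
    rw [hJdom]
    have : {m : ℕ | ((secL n q1 : H1) : ℕ → ℂ) m ≠ 0}
        = (fun m : ℕ => ((m, n) : ℕ × ℕ)) ⁻¹' {p : ℕ × ℕ | (q1 : ℕ × ℕ → ℂ) p ≠ 0} := rfl
    rw [this]
    exact hfin.preimage ((inj_row n).injOn)
  have hval : (J n) ⟨secL n q1, hmem⟩ = secL n q2 := by
    apply lp.ext; funext m
    rw [hJact n ⟨secL n q1, hmem⟩ m]
    show jacobiActRow n (fun m => (q1 : ℕ × ℕ → ℂ) (m, n)) m = (q2 : ℕ × ℕ → ℂ) (m, n)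
    rw [jacobi_row_eq]
    have : (q2 : ℕ × ℕ → ℂ) (m, n) = (T g : H2) (m, n) := by rw [hg2]
    rw [this, hTact g (m, n), hg1]
  rw [LinearPMap.mem_graph_iff]
  exact ⟨⟨secL n q1, hmem⟩, rfl, hval⟩

include hTdom hTact hJdom hJact in
lemma emb_graph (n : ℕ) :
    ∀ q ∈ (J n).graph, ((embL n).prodMap (embL n)) q ∈ T.graph := by
  rintro ⟨q1, q2⟩ hq
  obtain ⟨u, hu1, hu2⟩ := (J n).mem_graph_iff.mp hq
  simp only at hu1 hu2
  have hfin : {m : ℕ | (q1 : ℕ → ℂ) m ≠ 0}.Finite := (hJdom n q1).mp (hu1 ▸ u.2)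
  have hmem : embL n q1 ∈ T.domain := by
    rw [hTdom]
    apply Set.Finite.subset (hfin.image (fun m : ℕ => ((m, n) : ℕ × ℕ)))
    intro p hp
    simp only [Set.mem_setOf_eq] at hp
    have hp2 : p.2 = n := by
      by_contra h
      exact hp (by show embFun n _ p = 0; simp [embFun, h])
    have hp1 : (q1 : ℕ → ℂ) p.1 ≠ 0 := by
      intro h
      exact hp (by show embFun n _ p = 0; simp [embFun, h, hp2])
    exact ⟨p.1, hp1, by rw [Prod.ext_iff]; exact ⟨rfl, hp2.symm⟩⟩
  have hrow : jacobiActRow n ⇑(q1 : H1) = ⇑(q2 : H1) := by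
    funext m
    rw [← hu2, hJact n u m, hu1]
  have hval : T ⟨embL n q1, hmem⟩ = embL n q2 := by
    apply lp.ext; funext p
    rw [hTact ⟨embL n q1, hmem⟩ p]
    show jacobiAct (embFun n ⇑(q1 : H1)) p = embFun n ⇑(q2 : H1) p
    rw [jacobi_emb, hrow]
  rw [LinearPMap.mem_graph_iff]
  exact ⟨⟨embL n q1, hmem⟩, rfl, hval⟩

include hTdom hTact hJdom hJact in
lemma J_isClosable (n : ℕ) : (J n).IsClosable := by
  have h0 : ∀ x ∈ (J n).graph.topologicalClosure, x.1 = (0 : H1) → x.2 = (0 : H1) := by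
    intro x hx h1
    have hmap := map_topologicalClosure ((embL n).prodMap (embL n)) _ _
      (emb_graph T hTdom hTact J hJdom hJact n) hx
    have hadj : ((embL n x.1, embL n x.2) : H2 × H2) ∈ T.adjoint.graph :=
      clgraph_le_adj T hTdom hTact hmap
    have hz : embL n x.2 = 0 := T.adjoint.graph_fst_eq_zero_snd hadj (by rw [h1, map_zero])
    have := congrArg (secL n) hz
    rw [sec_emb] at this
    simpa using this
  exact ⟨_, ((J n).graph.topologicalClosure.toLinearPMap_graph_eq h0).symm⟩

end TJ

end CP

open Filter Topology

/-- The closure `T** = cl T` of the Calvo–Picón operator `T` has domain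
`{f ∈ D(T*) : ∀ n, the n-th section Pₙf belongs to the domain of the closure of Jₙ}`
and acts by `T* `. -/
theorem closure_of_CalvoPicon_T4_via_sections
    (T : H2 →ₗ.[ℂ] H2)
    (hTdom : ∀ f : H2, f ∈ T.domain ↔ {p : ℕ × ℕ | f p ≠ 0}.Finite)
    (hTact : ∀ f : T.domain, ∀ p : ℕ × ℕ, (T f : H2) p = jacobiAct (⇑(f : H2)) p)
    (J : ℕ → (H1 →ₗ.[ℂ] H1))
    (hJdom : ∀ n : ℕ, ∀ u : H1, u ∈ (J n).domain ↔ {m : ℕ | u m ≠ 0}.Finite)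
    (hJact : ∀ n : ℕ, ∀ u : (J n).domain, ∀ m : ℕ,
      ((J n) u : H1) m = jacobiActRow n (⇑(u : H1)) m) :
    (∀ f : H2, f ∈ T.closure.domain ↔
      (f ∈ T.adjoint.domain ∧
        ∀ n : ℕ, ∃ hs : Memℓp (fun m : ℕ => f (m, n)) 2,
          (⟨fun m : ℕ => f (m, n), hs⟩ : H1) ∈ (J n).closure.domain)) ∧
    (∀ (f : H2) (hf : f ∈ T.closure.domain) (hf' : f ∈ T.adjoint.domain),
      T.closure ⟨f, hf⟩ = T.adjoint ⟨f, hf'⟩) := by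
  classical
  have hTcl : T.IsClosable := CP.T_isClosable T hTdom hTact
  have hgraph : T.closure.graph = T.graph.topologicalClosure :=
    (hTcl.graph_closure_eq_closure_graph).symm
  have hJcl : ∀ n, (J n).IsClosable := fun n =>
    CP.J_isClosable T hTdom hTact J hJdom hJact n
  have hJgraph : ∀ n, (J n).closure.graph = (J n).graph.topologicalClosure :=
    fun n => ((hJcl n).graph_closure_eq_closure_graph).symm
  have hadj := CP.clgraph_le_adj T hTdom hTact
  constructor
  · intro f
    constructor
    · intro hf
      have hpair := T.closure.mem_graph ⟨f, hf⟩
      rw [hgraph] at hpair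
      refine ⟨LinearPMap.mem_domain_of_mem_graph (hadj hpair), ?_⟩
      intro n
      have hmap := CP.map_topologicalClosure ((CP.secL n).prodMap (CP.secL n)) _ _
        (CP.sec_graph T hTdom hTact J hJdom hJact n) hpair
      rw [← hJgraph n] at hmap
      have hdom : CP.secL n f ∈ (J n).closure.domain :=
        LinearPMap.mem_domain_of_mem_graph hmap
      exact ⟨CP.sec_memℓp n f, hdom⟩
    · rintro ⟨hf, hsec⟩
      set w : H2 := T.adjoint ⟨f, hf⟩ with hwdef
      have hwpt : ∀ p : ℕ × ℕ, (w : ℕ × ℕ → ℂ) p = jacobiAct (⇑f) p := fun p =>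
        CP.adj_apply_pt T hTdom hTact ⟨f, hf⟩ p
      have hpairs : ∀ n : ℕ, ((CP.embL n (CP.secL n f), CP.embL n (CP.secL n w)) : H2 × H2)
          ∈ T.graph.topologicalClosure := by
        intro n
        obtain ⟨hs, hmem'⟩ := hsec n
        have hmem : CP.secL n f ∈ (J n).closure.domain := hmem'
        have hg := (J n).closure.mem_graph ⟨CP.secL n f, hmem⟩
        rw [hJgraph n] at hg
        have hmap := CP.map_topologicalClosure ((CP.embL n).prodMap (CP.embL n)) _ _
          (CP.emb_graph T hTdom hTact J hJdom hJact n) hg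
        have hadj2 := hadj hmap
        obtain ⟨y, hy1, hy2⟩ := T.adjoint.mem_graph_iff.mp hadj2
        have hy1' : (y : H2) = CP.embL n (CP.secL n f) := hy1
        have hy2' : T.adjoint y = CP.embL n ((J n).closure ⟨CP.secL n f, hmem⟩) := hy2
        have hyv : ∀ p : ℕ × ℕ, ((T.adjoint y : H2) : ℕ × ℕ → ℂ) p
            = jacobiAct (⇑(y : H2)) p := CP.adj_apply_pt T hTdom hTact y
        have hkey : CP.embL n ((J n).closure ⟨CP.secL n f, hmem⟩)
            = CP.embL n (CP.secL n w) := by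
          apply lp.ext; funext p
          have l1 : ((CP.embL n ((J n).closure ⟨CP.secL n f, hmem⟩) : H2) : ℕ × ℕ → ℂ) p
              = jacobiAct (⇑(y : H2)) p := by
            rw [← hy2']; exact hyv p
          rw [l1, hy1']
          show jacobiAct (CP.embFun n (⇑(CP.secL n f : H1))) p
            = CP.embFun n (⇑(CP.secL n w : H1)) p
          rw [CP.jacobi_emb]
          unfold CP.embFun
          by_cases hp : p.2 = n
          · rw [if_pos hp, if_pos hp]
            show jacobiActRow n (fun m => (f : ℕ × ℕ → ℂ) (m, n)) p.1
              = (w : ℕ × ℕ → ℂ) (p.1, n)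
            rw [CP.jacobi_row_eq, hwpt (p.1, n)]
          · rw [if_neg hp, if_neg hp]
        have hmap' : ((CP.embL n (CP.secL n f),
            CP.embL n ((J n).closure ⟨CP.secL n f, hmem⟩)) : H2 × H2)
            ∈ T.graph.topologicalClosure := hmap
        rw [hkey] at hmap'
        exact hmap'
      have hsum1 : HasSum (fun n => CP.embL n (CP.secL n f)) f := CP.hasSum_emb_sec f
      have hsum2 : HasSum (fun n => CP.embL n (CP.secL n w)) w := CP.hasSum_emb_sec w
      have hten : Tendsto (fun N => ((∑ n ∈ Finset.range N, CP.embL n (CP.secL n f),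
          ∑ n ∈ Finset.range N, CP.embL n (CP.secL n w)) : H2 × H2)) atTop (𝓝 (f, w)) :=
        (hsum1.tendsto_sum_nat).prodMk_nhds (hsum2.tendsto_sum_nat)
      have hmemN : ∀ N : ℕ, ((∑ n ∈ Finset.range N, CP.embL n (CP.secL n f),
          ∑ n ∈ Finset.range N, CP.embL n (CP.secL n w)) : H2 × H2)
          ∈ T.graph.topologicalClosure := by
        intro N
        have hpair_sum : (∑ n ∈ Finset.range N,
            ((CP.embL n (CP.secL n f), CP.embL n (CP.secL n w)) : H2 × H2))
            = ((∑ n ∈ Finset.range N, CP.embL n (CP.secL n f),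
                ∑ n ∈ Finset.range N, CP.embL n (CP.secL n w)) : H2 × H2) := by
          rw [Prod.ext_iff]
          constructor
          · rw [Prod.fst_sum]
          · rw [Prod.snd_sum]
        rw [← hpair_sum]
        exact Submodule.sum_mem _ (fun n _ => hpairs n)
      have hfw : ((f : H2), w) ∈ T.graph.topologicalClosure :=
        (Submodule.isClosed_topologicalClosure _).mem_of_tendsto hten
          (Filter.Eventually.of_forall hmemN)
      rw [← hgraph] at hfw
      exact LinearPMap.mem_domain_of_mem_graph hfw
  · intro f hf hf'
    have hpair := T.closure.mem_graph ⟨f, hf⟩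
    rw [hgraph] at hpair
    obtain ⟨y, hy1, hy2⟩ := T.adjoint.mem_graph_iff.mp (hadj hpair)
    have hyy : (⟨f, hf'⟩ : T.adjoint.domain) = y := Subtype.ext hy1.symm
    rw [hyy, hy2]
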